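/- Consider an MDP with total number of state-action pairs A_tot, a value vector v with ‖v‖_∞ ≤ 2M, and rewards r ∈ [0,1]^A. Define the random vector g̃ by: sample (i,a_i) uniformly with probability 1/A_tot, then j with probability p_{ij}(a_i), and set g̃ = A_tot(v_i − v_j − r_{i,a_i}) e_{(i,a_i)}. Then E[g̃] = (Î − P)v − r, ‖g̃‖_∞ ≤ (4M+1)A_tot almost surely, and for every probability vector μ' ∈ Δ^A, E[Σ_{(i,a_i)} μ'_{i,a_i} g̃_{(i,a_i)}²] ≤ (4M+1)² A_tot. -/

import Mathlib

open Finset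

/-- The μ-side gradient estimator for mixing AMDPs: sample a state-action pair
uniformly, a next state from its transition row, and output
`A_tot (v_i − v_j − r_{i,a}) e_{(i,a)}`. It is unbiased for `(Î − P)v − r`,
has entries bounded by `(4M+1)A_tot`, and second moment at most `(4M+1)² A_tot`
in every local norm on the simplex. -/
theorem stmt9 {S A : Type*} [Fintype S] [DecidableEq S] [Fintype A] [DecidableEq A]
    (st : A → S) (P : Matrix A S ℝ)
    (hPnn : ∀ a j, 0 ≤ P a j) (hProw : ∀ a, ∑ j, P a j = 1)
    (Atot : ℕ) (hAtot : Atot = Fintype.card A)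
    (M : ℝ) (hM : 0 < M)
    (v : S → ℝ) (hv : ∀ i, |v i| ≤ 2 * M)
    (r : A → ℝ) (hr : ∀ a, 0 ≤ r a ∧ r a ≤ 1)
    (g : A × S → A → ℝ)
    (hg : ∀ ω a', g ω a' =
      if a' = ω.1 then (Atot : ℝ) * (v (st ω.1) - v ω.2 - r ω.1) else 0) :
    (∀ a', ∑ ω : A × S, ((1 / (Atot : ℝ)) * P ω.1 ω.2) * g ω a'
        = (v (st a') - ∑ j, P a' j * v j) - r a') ∧
    (∀ ω : A × S, ∀ a', |g ω a'| ≤ (4 * M + 1) * Atot) ∧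
    (∀ μ' : A → ℝ, (∀ a, 0 ≤ μ' a) → ∑ a, μ' a = 1 →
      ∑ ω : A × S, ((1 / (Atot : ℝ)) * P ω.1 ω.2) * (∑ a, μ' a * (g ω a) ^ 2)
        ≤ (4 * M + 1) ^ 2 * Atot) := by
  have hc : ∀ (a : A) (j : S), |v (st a) - v j - r a| ≤ 4 * M + 1 := by
    intro a j
    have h1 := hv (st a)
    have h2 := hv j
    have h3 := hr a
    have := abs_sub (v (st a) - v j) (r a)
    have := abs_sub (v (st a)) (v j)
    have hra : |r a| ≤ 1 := by rw [abs_of_nonneg h3.1]; exact h3.2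
    calc |v (st a) - v j - r a| ≤ |v (st a) - v j| + |r a| := abs_sub _ _
      _ ≤ (|v (st a)| + |v j|) + |r a| := by gcongr
      _ ≤ (2 * M + 2 * M) + 1 := by gcongr
      _ = 4 * M + 1 := by ring
  refine ⟨?_, ?_, ?_⟩
  · intro a'
    have hA : Nonempty A := ⟨a'⟩
    have hAt : (Atot : ℝ) ≠ 0 := by
      rw [hAtot]; exact_mod_cast (Fintype.card_pos).ne'
    rw [Fintype.sum_prod_type]
    have key : ∀ a : A, ∑ j : S, (1 / (Atot : ℝ) * P a j) * g (a, j) a'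
        = if a = a' then ∑ j, P a' j * (v (st a') - v j - r a') else 0 := by
      intro a
      by_cases h : a = a'
      · subst h
        simp only [if_pos rfl]
        refine Finset.sum_congr rfl fun j _ => ?_
        rw [hg, if_pos rfl]
        field_simp
      · rw [if_neg h]
        refine Finset.sum_eq_zero fun j _ => ?_
        rw [hg]; simp [Ne.symm h]
    simp_rw [key]
    rw [Finset.sum_ite_eq' Finset.univ a']
    simp only [Finset.mem_univ, if_pos]
    simp only [mul_sub]
    rw [Finset.sum_sub_distrib, Finset.sum_sub_distrib, ← Finset.sum_mul,
      ← Finset.sum_mul, hProw]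
    ring
  · intro ω a'
    rw [hg]
    have hpos : 0 ≤ (4 * M + 1) * (Atot : ℝ) := by positivity
    by_cases h : a' = ω.1
    · rw [if_pos h, abs_mul, Nat.abs_cast]
      calc (Atot : ℝ) * |v (st ω.1) - v ω.2 - r ω.1| ≤ (Atot : ℝ) * (4 * M + 1) := by
            gcongr; exact hc _ _
        _ = (4 * M + 1) * Atot := by ring
    · rw [if_neg h]; simpa using hpos
  · intro μ' hμnn hμs
    have hinner : ∀ ω : A × S, ∑ a, μ' a * g ω a ^ 2
        = μ' ω.1 * ((Atot : ℝ) * (v (st ω.1) - v ω.2 - r ω.1)) ^ 2 := by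
      intro ω
      rw [Finset.sum_eq_single ω.1]
      · rw [hg]; simp
      · intro b _ hb; rw [hg]; simp [hb]
      · simp
    have hx : (1 / (Atot : ℝ)) * ((Atot : ℝ)) ^ 2 = Atot := by
      rcases Nat.eq_zero_or_pos Atot with h | h
      · simp [h]
      · have : (Atot : ℝ) ≠ 0 := by exact_mod_cast h.ne'
        field_simp
    calc ∑ ω : A × S, ((1 / (Atot : ℝ)) * P ω.1 ω.2) * (∑ a, μ' a * (g ω a) ^ 2)
        ≤ ∑ ω : A × S, ((1 / (Atot : ℝ)) * P ω.1 ω.2) *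
            (μ' ω.1 * ((4 * M + 1) * (Atot : ℝ)) ^ 2) := by
          refine Finset.sum_le_sum fun ω _ => ?_
          rw [hinner]
          have h1 : 0 ≤ (1 / (Atot : ℝ)) * P ω.1 ω.2 := by
            have := hPnn ω.1 ω.2; positivity
          refine mul_le_mul_of_nonneg_left ?_ h1
          refine mul_le_mul_of_nonneg_left ?_ (hμnn ω.1)
          rw [← sq_abs ((Atot : ℝ) * _)]
          refine pow_le_pow_left₀ (abs_nonneg _) ?_ 2
          rw [abs_mul, Nat.abs_cast]
          calc (Atot : ℝ) * |v (st ω.1) - v ω.2 - r ω.1|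
              ≤ (Atot : ℝ) * (4 * M + 1) := by gcongr; exact hc _ _
            _ = (4 * M + 1) * Atot := by ring
      _ = (4 * M + 1) ^ 2 * Atot := by
          rw [Fintype.sum_prod_type]
          have : ∀ a : A, ∑ j : S, ((1 / (Atot : ℝ)) * P a j) *
              (μ' a * ((4 * M + 1) * (Atot : ℝ)) ^ 2)
              = μ' a * ((4 * M + 1) ^ 2 * ((1 / (Atot : ℝ)) * (Atot : ℝ) ^ 2)) := by
            intro a
            rw [← Finset.sum_mul, mul_comm, ← mul_assoc, ← Finset.mul_sum, hProw]
            ring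
          simp_rw [this, hx]
          rw [← Finset.sum_mul, hμs, one_mul]
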